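/- Let p be a polynomial with real coefficients of degree 6, with coefficients c_i, such that c_0 > 0, p is palindromic (c_i = c_{6-i} for all 0 ≤ i ≤ 6), and the coefficients of p alternate in sign ((-1)^i · c_i ≥ 0 for every i ≥ 0). If p has a complex root z with Re z ≤ -1, then p has a real root x with x > 1 and x + 1/x > 2 - c_5/c_6. -/

import Mathlib

/-- A real polynomial of degree `6` with positive constant term, palindromic
coefficients (`cᵢ = c_{6-i}`) and coefficients alternating in sign, which has a
complex root `z` with `Re z ≤ -1`, has a real root `x > 1` with
`x + 1/x > 2 - c₅/c₆`. -/
theorem stmt_4 (p : Polynomial ℝ)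
    (hdeg : p.natDegree = 6)
    (h0 : 0 < p.coeff 0)
    (hpal : ∀ i ≤ 6, p.coeff i = p.coeff (6 - i))
    (halt : ∀ i : ℕ, 0 ≤ (-1 : ℝ) ^ i * p.coeff i)
    (z : ℂ) (hz : Polynomial.aeval z p = 0) (hre : z.re ≤ -1) :
    ∃ x : ℝ, p.eval x = 0 ∧ 1 < x ∧ 2 - p.coeff 5 / p.coeff 6 < x + 1 / x := by
  obtain ⟨c6, hc6def⟩ : ∃ c, c = p.coeff 6 := ⟨_, rfl⟩
  obtain ⟨c5, hc5def⟩ : ∃ c, c = p.coeff 5 := ⟨_, rfl⟩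
  obtain ⟨c4, hc4def⟩ : ∃ c, c = p.coeff 4 := ⟨_, rfl⟩
  obtain ⟨c3, hc3def⟩ : ∃ c, c = p.coeff 3 := ⟨_, rfl⟩
  have h06 : p.coeff 0 = c6 := by rw [hc6def]; exact hpal 0 (by norm_num)
  have h15 : p.coeff 1 = c5 := by rw [hc5def]; exact hpal 1 (by norm_num)
  have h24 : p.coeff 2 = c4 := by rw [hc4def]; exact hpal 2 (by norm_num)
  have hc6 : 0 < c6 := by rw [← h06] at *; exact h0
  have hc5 : c5 ≤ 0 := by have := halt 5; rw [← hc5def] at this; nlinarith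
  have hc4p : 0 ≤ c4 := by have := halt 2; rw [h24] at this; nlinarith
  have hc3 : c3 ≤ 0 := by have := halt 3; rw [← hc3def] at this; nlinarith
  -- expanded root equation
  have hzs : (c6:ℂ) * z ^ 6 + c5 * z ^ 5 + c4 * z ^ 4 + c3 * z ^ 3
      + c4 * z ^ 2 + c5 * z + c6 = 0 := by
    rw [Polynomial.aeval_eq_sum_range, hdeg] at hz
    simp only [Finset.sum_range_succ, Finset.sum_range_zero, Complex.real_smul] at hz
    rw [h06, h15, h24, ← hc3def, ← hc4def, ← hc5def, ← hc6def] at hz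
    linear_combination hz
  -- z is not real, not zero
  have hz0 : z ≠ 0 := by
    intro h; rw [h] at hre; simp at hre; linarith
  have hns : 0 < Complex.normSq z := Complex.normSq_pos.mpr hz0
  have him : z.im ≠ 0 := by
    intro h
    have hzre : z = (z.re : ℂ) := by apply Complex.ext <;> simp [h]
    rw [hzre] at hzs
    have : (↑(c6 * z.re ^ 6 + c5 * z.re ^ 5 + c4 * z.re ^ 4 + c3 * z.re ^ 3
        + c4 * z.re ^ 2 + c5 * z.re + c6) : ℂ) = 0 := by push_cast; linear_combination hzs
    have heq : c6 * z.re ^ 6 + c5 * z.re ^ 5 + c4 * z.re ^ 4 + c3 * z.re ^ 3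
        + c4 * z.re ^ 2 + c5 * z.re + c6 = 0 := by exact_mod_cast this
    have ht : (0:ℝ) ≤ -z.re := by linarith
    nlinarith [mul_nonneg (mul_nonneg (show (0:ℝ) ≤ -c5 by linarith) ht) (sq_nonneg (z.re^2)),
      mul_nonneg (mul_nonneg (show (0:ℝ) ≤ -c3 by linarith) ht) (sq_nonneg z.re),
      mul_nonneg hc4p (sq_nonneg (z.re^2)),
      mul_nonneg hc4p (sq_nonneg z.re),
      mul_nonneg (show (0:ℝ) ≤ -c5 by linarith) ht,
      mul_pos hc6 (pow_pos (show (0:ℝ) < z.re^2 by nlinarith) 3)]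
  have hns1 : Complex.normSq z ≠ 1 := by
    intro h
    have h1 : z.re * z.re + z.im * z.im = 1 := by rw [← Complex.normSq_apply, h]
    have h2 : z.im * z.im ≤ 0 := by nlinarith
    exact him (mul_self_eq_zero.mp (le_antisymm h2 (mul_self_nonneg _)))
  -- u = z + 1/z, v = conj u
  obtain ⟨u, hu_def⟩ : ∃ u : ℂ, u = z + z⁻¹ := ⟨_, rfl⟩
  obtain ⟨v, hv_def⟩ : ∃ v : ℂ, v = (starRingEnd ℂ) u := ⟨_, rfl⟩
  have hgu : (c6:ℂ) * u ^ 3 + c5 * u ^ 2 + (c4 - 3 * c6) * u + (c3 - 2 * c5) = 0 := by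
    rw [hu_def]
    field_simp
    linear_combination hzs
  have hgv : (c6:ℂ) * v ^ 3 + c5 * v ^ 2 + (c4 - 3 * c6) * v + (c3 - 2 * c5) = 0 := by
    have := congrArg (starRingEnd ℂ) hgu
    rw [hv_def]
    simpa [map_add, map_mul, map_pow, map_ofNat, Complex.conj_ofReal] using this
  have hure : u.re = z.re + z.re / Complex.normSq z := by
    rw [hu_def]; simp [Complex.add_re, Complex.inv_re]
  have huim : u.im = z.im - z.im / Complex.normSq z := by
    rw [hu_def]; simp [Complex.add_im, Complex.inv_im]; ring
  have huv : u ≠ v := by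
    rw [hv_def]
    intro h
    have himu : u.im = 0 := Complex.conj_eq_iff_im.mp h.symm
    rw [huim] at himu
    have : z.im * (Complex.normSq z - 1) = 0 := by
      field_simp at himu
      linear_combination himu
    rcases mul_eq_zero.mp this with h' | h'
    · exact him h'
    · exact hns1 (by linarith)
  -- the real root of the cubic
  obtain ⟨R, hR_def⟩ : ∃ R : ℝ, R = -c5 / c6 - 2 * (z.re + z.re / Complex.normSq z) := ⟨_, rfl⟩
  have huvsum : u + v = ((2 * (z.re + z.re / Complex.normSq z) : ℝ) : ℂ) := by
    rw [hv_def, Complex.add_conj, hure]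
  have hqR : c6 * R + c5 + c6 * (2 * (z.re + z.re / Complex.normSq z)) = 0 := by
    rw [hR_def]; field_simp; ring
  have hq : (c6 : ℂ) * (R : ℂ) + c5 + c6 * (u + v) = 0 := by
    rw [huvsum]; exact_mod_cast hqR
  have hgRC : (c6:ℂ) * (R:ℂ) ^ 3 + c5 * (R:ℂ) ^ 2 + (c4 - 3 * c6) * (R:ℂ) + (c3 - 2 * c5) = 0 := by
    have key : (u - v) * ((c6:ℂ) * (R:ℂ) ^ 3 + c5 * (R:ℂ) ^ 2 + (c4 - 3 * c6) * (R:ℂ) + (c3 - 2 * c5)) = 0 := by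
      linear_combination ((R:ℂ) - v) * hgu - ((R:ℂ) - u) * hgv
        + (((R:ℂ) - u) * ((R:ℂ) - v) * (u - v)) * hq
    exact (mul_eq_zero.mp key).resolve_left (sub_ne_zero.mpr huv)
  have hgR : c6 * R ^ 3 + c5 * R ^ 2 + (c4 - 3 * c6) * R + (c3 - 2 * c5) = 0 := by
    exact_mod_cast hgRC
  -- inequalities on R
  have hres : z.re / Complex.normSq z < 0 := div_neg_of_neg_of_pos (by linarith) hns
  have hc56 : 0 ≤ -c5 / c6 := div_nonneg (by linarith) (le_of_lt hc6)
  have hR2 : 2 < R := by rw [hR_def]; linarith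
  have hRmain : 2 - c5 / c6 < R := by
    rw [hR_def]
    have h' : -c5 / c6 = -(c5 / c6) := by ring
    linarith
  -- construct x
  obtain ⟨s, hs_def⟩ : ∃ s : ℝ, s = Real.sqrt (R ^ 2 - 4) := ⟨_, rfl⟩
  have hs0 : 0 ≤ s := hs_def ▸ Real.sqrt_nonneg _
  have h4 : (0:ℝ) ≤ R ^ 2 - 4 := by
    have h := mul_nonneg (show (0:ℝ) ≤ R - 2 by linarith) (show (0:ℝ) ≤ R + 2 by linarith)
    have e : (R - 2) * (R + 2) = R ^ 2 - 4 := by ring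
    linarith
  have hs2 : s ^ 2 = R ^ 2 - 4 := by rw [hs_def]; exact Real.sq_sqrt h4
  obtain ⟨x, hx_def⟩ : ∃ x : ℝ, x = (R + s) / 2 := ⟨_, rfl⟩
  have hx1 : 1 < x := by rw [hx_def]; linarith
  have hx0 : x ≠ 0 := by intro h; rw [h] at hx1; linarith
  have hquad : x ^ 2 - R * x + 1 = 0 := by rw [hx_def]; linear_combination hs2 / 4
  have hxR : x + 1 / x = R := by
    field_simp
    linear_combination hquad
  refine ⟨x, ?_, hx1, by rw [hxR, ← hc5def, ← hc6def]; exact hRmain⟩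
  have hev : p.eval x = c6 * x ^ 6 + c5 * x ^ 5 + c4 * x ^ 4 + c3 * x ^ 3
      + c4 * x ^ 2 + c5 * x + c6 := by
    rw [Polynomial.eval_eq_sum_range, hdeg]
    simp only [Finset.sum_range_succ, Finset.sum_range_zero]
    rw [h06, h15, h24, ← hc3def, ← hc4def, ← hc5def, ← hc6def]
    ring
  rw [← hxR] at hgR
  field_simp at hgR
  have key : x ^ 3 * p.eval x = 0 := by
    rw [hev]
    linear_combination x ^ 3 * hgR
  exact (mul_eq_zero.mp key).resolve_left (pow_ne_zero 3 hx0)
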